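/- Suppose {a_n}_{n=0}^∞ is a Stieltjes moment sequence with representing measure μ, κ is an integer ≥ 2, {a_n^{1/κ}}_{n=0}^∞ is a Stieltjes moment sequence with representing measure ν, and {a_n}_{n=0}^∞ is determinate. Then: (i) if ν([0,β)) = 0 for some real β > 0, then μ([0,β^κ)) = 0; (ii) if μ([0,θ)) = 0 for some real θ > 0, then ν([0,θ^{1/κ})) = 0; (iii) if μ([0,θ)) = 0 for some real θ > 0 with θ ∈ supp μ, then ν([0,θ^{1/κ})) = 0 and θ^{1/κ} ∈ supp ν. -/

import Mathlib

open MeasureTheory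

/-- The closed support of a Borel measure: the set of points all of whose open
neighbourhoods have positive measure. -/
def msupport {X : Type*} [TopologicalSpace X] [MeasurableSpace X] (μ : Measure X) : Set X :=
  {x | ∀ U : Set X, IsOpen U → x ∈ U → 0 < μ U}

/-- `μ` is a representing measure (on `[0,∞)`, modelled as a measure on `ℝ` vanishing on
`(-∞,0)`) of the Stieltjes moment sequence `a`. -/
def IsRepMeas (a : ℕ → ℝ) (μ : Measure ℝ) : Prop :=
  (∀ n, 0 ≤ a n) ∧ μ (Set.Iio 0) = 0 ∧
    ∀ n : ℕ, ∫⁻ x, ENNReal.ofReal (x ^ n) ∂μ = ENNReal.ofReal (a n)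

/-- `a` is a Stieltjes moment sequence. -/
def IsStieltjes (a : ℕ → ℝ) : Prop :=
  ∃ μ : Measure ℝ, IsRepMeas a μ

/-- A Stieltjes moment sequence is determinate if it has a unique representing measure. -/
def IsDeterminate (a : ℕ → ℝ) : Prop :=
  ∀ μ ν : Measure ℝ, IsRepMeas a μ → IsRepMeas a ν → μ = ν

private lemma meas_ofReal_pow (n : ℕ) : Measurable fun x : ℝ => ENNReal.ofReal (x ^ n) :=
  (measurable_id.pow_const n).ennreal_ofReal

/-- iterated multiplicative convolution powers of a measure on `[0,∞)`, with the
properties we need. -/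
private lemma conv_pack (ν : Measure ℝ) (hfin : ν Set.univ < ⊤) (hν0 : ν (Set.Iio 0) = 0) :
    ∀ k : ℕ, ∃ M : Measure ℝ, M Set.univ < ⊤ ∧ M (Set.Iio 0) = 0 ∧
      (∀ n : ℕ, ∫⁻ x, ENNReal.ofReal (x ^ n) ∂M
          = (∫⁻ x, ENNReal.ofReal (x ^ n) ∂ν) ^ (k + 1)) ∧
      (∀ β : ℝ, 0 < β → ν (Set.Iio β) = 0 → M (Set.Iio (β ^ (k + 1))) = 0) ∧
      (∀ c : ℝ, 0 ≤ c → ν (Set.Icc 0 c) ^ (k + 1) ≤ M (Set.Icc 0 (c ^ (k + 1)))) := by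
  haveI : IsFiniteMeasure ν := ⟨hfin⟩
  intro k
  induction k with
  | zero =>
      exact ⟨ν, hfin, hν0, fun n => by simp, fun β hβ h => by simpa using h,
        fun c hc => by simp⟩
  | succ k ih =>
      obtain ⟨M, hMfin, hM0, hMmom, hMβ, hMc⟩ := ih
      haveI : IsFiniteMeasure M := ⟨hMfin⟩
      have hmul : Measurable fun p : ℝ × ℝ => p.1 * p.2 :=
        measurable_fst.mul measurable_snd
      refine ⟨Measure.map (fun p : ℝ × ℝ => p.1 * p.2) (ν.prod M), ?_, ?_, ?_, ?_, ?_⟩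
      · rw [Measure.map_apply hmul MeasurableSet.univ]
        exact (measure_mono (Set.subset_univ _)).trans_lt (measure_lt_top _ _)
      · rw [Measure.map_apply hmul measurableSet_Iio]
        refine measure_mono_null (fun p hp => ?_)
          (show ν.prod M ((Set.Iio 0 ×ˢ Set.univ) ∪ (Set.univ ×ˢ Set.Iio 0)) = 0 from
            measure_union_null (by rw [Measure.prod_prod, hν0, zero_mul])
              (by rw [Measure.prod_prod, hM0, mul_zero]))
        by_contra hcon
        simp only [Set.mem_union, Set.mem_prod, Set.mem_Iio, Set.mem_univ, and_true,
          true_and, not_or, not_lt] at hcon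
        exact absurd (mul_nonneg hcon.1 hcon.2) (not_le.2 hp)
      · intro n
        rw [lintegral_map (meas_ofReal_pow n) hmul]
        have hae : ∀ᵐ p : ℝ × ℝ ∂ν.prod M,
            ENNReal.ofReal ((p.1 * p.2) ^ n)
              = ENNReal.ofReal (p.1 ^ n) * ENNReal.ofReal (p.2 ^ n) := by
          have h0 : ν.prod M {p : ℝ × ℝ | ¬ (0 ≤ p.1 ∧ 0 ≤ p.2)} = 0 := by
            refine measure_mono_null (fun p hp => ?_)
              (show ν.prod M ((Set.Iio 0 ×ˢ Set.univ) ∪ (Set.univ ×ˢ Set.Iio 0)) = 0 from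
                measure_union_null (by rw [Measure.prod_prod, hν0, zero_mul])
                  (by rw [Measure.prod_prod, hM0, mul_zero]))
            simp only [Set.mem_setOf_eq, not_and_or, not_le] at hp
            rcases hp with h | h
            · exact Or.inl ⟨h, Set.mem_univ _⟩
            · exact Or.inr ⟨Set.mem_univ _, h⟩
          filter_upwards [(ae_iff.2 h0 : ∀ᵐ p : ℝ × ℝ ∂ν.prod M, 0 ≤ p.1 ∧ 0 ≤ p.2)]
            with p hp
          rw [mul_pow, ENNReal.ofReal_mul (pow_nonneg hp.1 n)]
        rw [lintegral_congr_ae hae,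
          lintegral_prod_mul (meas_ofReal_pow n).aemeasurable (meas_ofReal_pow n).aemeasurable,
          hMmom n, ← pow_succ']
      · intro β hβ hνβ
        rw [Measure.map_apply hmul measurableSet_Iio]
        refine measure_mono_null (fun p hp => ?_)
          (show ν.prod M ((Set.Iio β ×ˢ Set.univ) ∪ (Set.univ ×ˢ Set.Iio (β ^ (k + 1)))) = 0
            from measure_union_null (by rw [Measure.prod_prod, hνβ, zero_mul])
              (by rw [Measure.prod_prod, hMβ β hβ hνβ, mul_zero]))
        by_contra hcon
        simp only [Set.mem_union, Set.mem_prod, Set.mem_Iio, Set.mem_univ, and_true,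
          true_and, not_or, not_lt] at hcon
        have : β ^ (k + 2) ≤ p.1 * p.2 := by
          calc β ^ (k + 2) = β * β ^ (k + 1) := by ring
          _ ≤ p.1 * p.2 :=
            mul_le_mul hcon.1 hcon.2 (pow_nonneg hβ.le _) (hβ.le.trans hcon.1)
        exact absurd this (not_le.2 hp)
      · intro c hc
        rw [Measure.map_apply hmul measurableSet_Icc]
        have hsub : Set.Icc (0:ℝ) c ×ˢ Set.Icc (0:ℝ) (c ^ (k + 1))
            ⊆ (fun p : ℝ × ℝ => p.1 * p.2) ⁻¹' Set.Icc 0 (c ^ (k + 2)) := by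
          rintro ⟨x, y⟩ ⟨⟨hx0, hxc⟩, ⟨hy0, hyc⟩⟩
          refine ⟨mul_nonneg hx0 hy0, ?_⟩
          calc x * y ≤ c * c ^ (k + 1) := mul_le_mul hxc hyc hy0 hc
          _ = c ^ (k + 2) := by ring
        calc ν (Set.Icc 0 c) ^ (k + 2)
            = ν (Set.Icc 0 c) * ν (Set.Icc 0 c) ^ (k + 1) := by ring
          _ ≤ ν (Set.Icc 0 c) * M (Set.Icc 0 (c ^ (k + 1))) :=
            mul_le_mul_right (hMc c hc) _
          _ = ν.prod M (Set.Icc (0:ℝ) c ×ˢ Set.Icc (0:ℝ) (c ^ (k + 1))) :=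
            (Measure.prod_prod _ _).symm
          _ ≤ _ := measure_mono hsub

theorem stmt12 (a : ℕ → ℝ) (μ ν : Measure ℝ) (κ : ℕ) (hκ : 2 ≤ κ)
    (hμ : IsRepMeas a μ)
    (hν : IsRepMeas (fun n => a n ^ (1 / (κ : ℝ))) ν)
    (hdet : IsDeterminate a) :
    (∀ β : ℝ, 0 < β → ν (Set.Ico 0 β) = 0 → μ (Set.Ico 0 (β ^ κ)) = 0) ∧
    (∀ θ : ℝ, 0 < θ → μ (Set.Ico 0 θ) = 0 → ν (Set.Ico 0 (θ ^ (1 / (κ : ℝ)))) = 0) ∧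
    (∀ θ : ℝ, 0 < θ → θ ∈ msupport μ → μ (Set.Ico 0 θ) = 0 →
      ν (Set.Ico 0 (θ ^ (1 / (κ : ℝ)))) = 0 ∧ θ ^ (1 / (κ : ℝ)) ∈ msupport ν) := by
  obtain ⟨ha, hν0, hνmom⟩ := hν
  have hκ0 : (κ : ℝ) ≠ 0 := by positivity
  have hκ1 : 1 ≤ κ := le_trans (by norm_num) hκ
  have hνfin : ν Set.univ < ⊤ := by
    have h := hνmom 0
    simp only [pow_zero, ENNReal.ofReal_one, lintegral_one] at h
    rw [h]
    exact ENNReal.ofReal_lt_top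
  obtain ⟨M, hMfin, hM0, hMmom, hMβ, hMc⟩ := conv_pack ν hνfin hν0 (κ - 1)
  have hk : κ - 1 + 1 = κ := Nat.succ_pred_eq_of_pos (lt_of_lt_of_le Nat.zero_lt_two hκ)
  rw [hk] at hMmom hMβ hMc
  have hMrep : IsRepMeas a M := by
    refine ⟨hμ.1, hM0, fun n => ?_⟩
    rw [hMmom n, hνmom n, ← ENNReal.ofReal_pow (Real.rpow_nonneg (hμ.1 n) _),
      ← Real.rpow_natCast (a n ^ (1 / (κ : ℝ))) κ, ← Real.rpow_mul (hμ.1 n),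
      one_div_mul_cancel hκ0, Real.rpow_one]
  have hμM : μ = M := hdet μ M hμ hMrep
  -- part (i)
  have part1 : ∀ β : ℝ, 0 < β → ν (Set.Ico 0 β) = 0 → μ (Set.Ico 0 (β ^ κ)) = 0 := by
    intro β hβ hνβ
    have hIio : ν (Set.Iio β) = 0 := by
      refine measure_mono_null (fun x hx => ?_) (measure_union_null hν0 hνβ)
      rcases lt_or_ge x 0 with h | h
      · exact Or.inl h
      · exact Or.inr ⟨h, hx⟩
    rw [hμM]
    exact measure_mono_null Set.Ico_subset_Iio_self (hMβ β hβ hIio)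
  -- part (ii)
  have part2 : ∀ θ : ℝ, 0 < θ → μ (Set.Ico 0 θ) = 0 →
      ν (Set.Ico 0 (θ ^ (1 / (κ : ℝ)))) = 0 := by
    intro θ hθ hμθ
    set c := θ ^ (1 / (κ : ℝ)) with hcdef
    have hc : 0 < c := Real.rpow_pos_of_pos hθ _
    have hcκ : c ^ κ = θ := by
      rw [hcdef, ← Real.rpow_natCast (θ ^ (1 / (κ : ℝ))) κ, ← Real.rpow_mul hθ.le,
        one_div_mul_cancel hκ0, Real.rpow_one]
    have claim : ∀ c' : ℝ, c' < c → ν (Set.Icc 0 c') = 0 := by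
      intro c' hc'
      rcases lt_or_ge c' 0 with h | h
      · rw [Set.Icc_eq_empty (by linarith), measure_empty]
      by_contra hpos
      have h1 : ν (Set.Icc 0 c') ^ κ ≤ M (Set.Icc 0 (c' ^ κ)) := hMc c' h
      have h2 : M (Set.Icc 0 (c' ^ κ)) ≤ M (Set.Ico 0 θ) := by
        refine measure_mono (fun x hx => ⟨hx.1, lt_of_le_of_lt hx.2 ?_⟩)
        calc c' ^ κ < c ^ κ := pow_lt_pow_left₀ hc' h (by omega)
        _ = θ := hcκ
      have h3 : M (Set.Ico 0 θ) = 0 := hμM ▸ hμθ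
      have : ν (Set.Icc 0 c') ^ κ = 0 :=
        le_antisymm ((h1.trans h2).trans_eq h3) zero_le
      exact hpos (pow_eq_zero_iff (by omega) |>.mp this)
    have hsub : Set.Ico (0:ℝ) c ⊆
        ⋃ q : {q : ℚ // (q : ℝ) < c}, Set.Icc (0:ℝ) (q : ℝ) := by
      intro x ⟨hx0, hxc⟩
      obtain ⟨q, hq1, hq2⟩ := exists_rat_btwn hxc
      exact Set.mem_iUnion.2 ⟨⟨q, hq2⟩, hx0, hq1.le⟩
    exact measure_mono_null hsub (measure_iUnion_null fun q => claim _ q.2)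
  refine ⟨part1, part2, fun θ hθ hsupp hμθ => ⟨part2 θ hθ hμθ, ?_⟩⟩
  -- part (iii)
  set c := θ ^ (1 / (κ : ℝ)) with hcdef
  have hc : 0 < c := Real.rpow_pos_of_pos hθ _
  have hcκ : c ^ κ = θ := by
    rw [hcdef, ← Real.rpow_natCast (θ ^ (1 / (κ : ℝ))) κ, ← Real.rpow_mul hθ.le,
      one_div_mul_cancel hκ0, Real.rpow_one]
  intro U hU hcU
  obtain ⟨ε, hε, hball⟩ := Metric.isOpen_iff.1 hU c hcU
  by_contra hcon
  push_neg at hcon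
  have hzero : ν U = 0 := le_antisymm hcon zero_le
  have hIco : ν (Set.Ico 0 (c + ε)) = 0 := by
    refine measure_mono_null (fun x hx => ?_)
      (measure_union_null (part2 θ hθ hμθ) hzero)
    rcases lt_or_ge x c with h | h
    · exact Or.inl ⟨hx.1, h⟩
    · refine Or.inr (hball ?_)
      rw [Real.ball_eq_Ioo]
      exact ⟨by linarith, by linarith [hx.2]⟩
  have hμ0 : μ (Set.Ico 0 ((c + ε) ^ κ)) = 0 := part1 _ (by linarith) hIco
  have hμIio : μ (Set.Iio ((c + ε) ^ κ)) = 0 := by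
    refine measure_mono_null (fun x hx => ?_) (measure_union_null hμ.2.1 hμ0)
    rcases lt_or_ge x 0 with h | h
    · exact Or.inl h
    · exact Or.inr ⟨h, hx⟩
  have hθmem : θ ∈ Set.Iio ((c + ε) ^ κ) := by
    rw [Set.mem_Iio, ← hcκ]
    exact pow_lt_pow_left₀ (by linarith) hc.le (by omega)
  exact absurd (hsupp _ isOpen_Iio hθmem) (by rw [hμIio]; exact lt_irrefl 0)
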